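/- Fix real numbers α > 0, β > 0, and R > 0, and set γ_R = α·γ_D and γ_E = (α/β)·γ_D (so that γ_R = α·γ_D = β·γ_E). Then (i) lim_{γ_D → ∞} 𝒫₃(α·γ_D, γ_D, (α/β)·γ_D, R) = 𝒫₃^lim := 1 − (β/(β + α·2^R))·(β/(β + 2^R)), and (ii) lim_{γ_D → ∞} γ_D · (𝒫₃(α·γ_D, γ_D, (α/β)·γ_D, R) − 𝒫₃^lim) = 𝓜̂₃ := (2^R − 1)(1 + 1/α) / ((1 + (α/β)·2^R)·(1 + (1/β)·2^R)). -/

import Mathlib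

open Filter Real

/-- Case III closed-form secrecy outage probability. -/
noncomputable def P3 (γR γD γE R : ℝ) : ℝ :=
  1 - Real.exp (-((2 : ℝ) ^ R - 1) / γD - ((2 : ℝ) ^ R - 1) / γR) *
    (1 + ((2 : ℝ) ^ R / γD) * γE)⁻¹ * (1 + ((2 : ℝ) ^ R / γR) * γE)⁻¹

/-- Theorem 9 (Case III, second high-SNR scenario): with `γ_R = α·γ_D = β·γ_E → ∞`,
(i) `𝒫₃ → 𝒫₃^lim = 1 − (β/(β + α·2^R))·(β/(β + 2^R))` and
(ii) `γ_D·(𝒫₃ − 𝒫₃^lim) → 𝓜̂₃ = (2^R − 1)(1 + 1/α)/((1 + (α/β)·2^R)(1 + (1/β)·2^R))`. -/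
theorem case3_asymptotic_proportional (α β R : ℝ) (hα : 0 < α) (hβ : 0 < β) (hR : 0 < R) :
    Tendsto (fun γD : ℝ => P3 (α * γD) γD ((α / β) * γD) R) atTop
      (nhds (1 - β / (β + α * (2 : ℝ) ^ R) * (β / (β + (2 : ℝ) ^ R)))) ∧
    Tendsto (fun γD : ℝ =>
        γD * (P3 (α * γD) γD ((α / β) * γD) R -
          (1 - β / (β + α * (2 : ℝ) ^ R) * (β / (β + (2 : ℝ) ^ R)))))
      atTop
      (nhds (((2 : ℝ) ^ R - 1) * (1 + 1 / α) /
        ((1 + (α / β) * (2 : ℝ) ^ R) * (1 + (1 / β) * (2 : ℝ) ^ R)))) := by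
  have hc0 : (0:ℝ) < (2:ℝ) ^ R := Real.rpow_pos_of_pos (by norm_num) R
  set c : ℝ := (2:ℝ) ^ R with hc
  set K : ℝ := (c - 1) * (1 + 1/α) with hK
  set A : ℝ := β / (β + α * c) * (β / (β + c)) with hA
  have hβαc : (0:ℝ) < β + α * c := by positivity
  have hβc : (0:ℝ) < β + c := by positivity
  have h1a : (0:ℝ) < 1 + α * c / β := by positivity
  have h1b : (0:ℝ) < 1 + c / β := by positivity
  have key : ∀ γ : ℝ, 0 < γ →
      P3 (α * γ) γ ((α / β) * γ) R = 1 - Real.exp (-(K * γ⁻¹)) * A := by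
    intro γ hγ
    have hγ0 : γ ≠ 0 := hγ.ne'
    unfold P3
    rw [← hc]
    have e1 : -(c - 1) / γ - (c - 1) / (α * γ) = -(K * γ⁻¹) := by
      rw [hK]
      field_simp
      ring
    have e2 : (c / γ) * ((α / β) * γ) = α * c / β := by
      field_simp
    have e3 : (c / (α * γ)) * ((α / β) * γ) = c / β := by
      field_simp
    rw [e1, e2, e3]
    have hAeq : (1 + α * c / β)⁻¹ * (1 + c / β)⁻¹ = A := by
      rw [hA]
      field_simp
    rw [mul_assoc, hAeq]
  have hinv : Tendsto (fun γ : ℝ => γ⁻¹) atTop (nhds 0) := tendsto_inv_atTop_zero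
  have hKγ : Tendsto (fun γ : ℝ => -(K * γ⁻¹)) atTop (nhds 0) := by
    have := (hinv.const_mul K).neg
    simpa using this
  have hexp : Tendsto (fun γ : ℝ => Real.exp (-(K * γ⁻¹))) atTop (nhds 1) := by
    have := (Real.continuous_exp.tendsto 0).comp hKγ
    simpa [Function.comp_def] using this
  constructor
  · have T1 : Tendsto (fun γ : ℝ => 1 - Real.exp (-(K * γ⁻¹)) * A) atTop
        (nhds (1 - 1 * A)) := tendsto_const_nhds.sub (hexp.mul_const A)
    rw [one_mul] at T1
    refine T1.congr' ?_
    filter_upwards [eventually_gt_atTop (0:ℝ)] with γ hγ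
    exact (key γ hγ).symm
  · -- part (ii)
    have hd : HasDerivAt (fun x : ℝ => Real.exp (-(K * x))) (-K) 0 := by
      have h1 : HasDerivAt (fun x : ℝ => -(K * x)) (-K) 0 := by
        have h := ((hasDerivAt_id (0:ℝ)).const_mul K).neg
        simp only [mul_one] at h
        exact h
      simpa using h1.exp
    have hslope := hasDerivAt_iff_tendsto_slope.mp hd
    have hinv' : Tendsto (fun γ : ℝ => γ⁻¹) atTop (nhdsWithin 0 {x : ℝ | x ≠ 0}) :=
      tendsto_inv_atTop_nhdsGT_zero.mono_right
        (nhdsWithin_mono 0 (fun x hx => ne_of_gt hx))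
    have hcomp : Tendsto (fun γ : ℝ => slope (fun x : ℝ => Real.exp (-(K * x))) 0 γ⁻¹)
        atTop (nhds (-K)) := hslope.comp hinv'
    have h2 : Tendsto (fun γ : ℝ => γ * (1 - Real.exp (-(K * γ⁻¹)))) atTop (nhds K) := by
      have := hcomp.neg
      rw [neg_neg] at this
      refine this.congr' ?_
      filter_upwards [eventually_gt_atTop (0:ℝ)] with γ hγ
      have hγ0 : γ ≠ 0 := hγ.ne'
      rw [slope_def_field]
      field_simp
      rw [mul_zero, neg_zero, Real.exp_zero]
      ring
    have T2 : Tendsto (fun γ : ℝ => A * (γ * (1 - Real.exp (-(K * γ⁻¹))))) atTop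
        (nhds (A * K)) := h2.const_mul A
    have hval : A * K = ((2:ℝ) ^ R - 1) * (1 + 1 / α) /
        ((1 + (α / β) * (2:ℝ) ^ R) * (1 + (1 / β) * (2:ℝ) ^ R)) := by
      rw [hA, hK, ← hc]
      have d1 : (0:ℝ) < 1 + (α / β) * c := by positivity
      have d2 : (0:ℝ) < 1 + (1 / β) * c := by positivity
      field_simp
    rw [hval] at T2
    refine T2.congr' ?_
    filter_upwards [eventually_gt_atTop (0:ℝ)] with γ hγ
    rw [key γ hγ]
    ring
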